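/- Let d₁, d₂: ℤ → ℝ be finitely supported real-valued 1D filters with |d̂ᵢ(ω)|² + |d̂ᵢ(ω+π)|² = 1 for all ω ∈ ℝ (i = 1, 2). Define 2D filters by b̂₀(ω₁,ω₂) = d̂₁(ω₁)·d̂₂(ω₂), b̂₂(ω₁,ω₂) = d̂₁(ω₁)·d̂₂(ω₂+π), b̂₁(ω) = e^{−iω₁}·conj(b̂₀(ω+(π,π))), b̂₃(ω) = e^{−iω₁}·conj(b̂₂(ω+(π,π))). Then {b₀; b₁, b₂, b₃} is a quincunx tight framelet filter bank. Moreover, if d₁ has order n sum rules with respect to 2 and d₂ has order m sum rules with respect to 2, then each of b₁, b₂, b₃ has at least order min(m,n) vanishing moments. -/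

import Mathlib

open Complex Real

/-- Fourier series of a finitely supported 1D filter. -/
noncomputable def fhat1 (u : ℤ → ℂ) (ω : ℝ) : ℂ :=
  ∑ᶠ k : ℤ, u k * Complex.exp (-(Complex.I) * (k : ℂ) * (ω : ℂ))

/-- Fourier series of a finitely supported 2D filter. -/
noncomputable def fhat2 (a : ℤ × ℤ → ℂ) (ω : ℝ × ℝ) : ℂ :=
  ∑ᶠ k : ℤ × ℤ, a k * Complex.exp (-(Complex.I) * ((k.1 : ℂ) * (ω.1 : ℂ) + (k.2 : ℂ) * (ω.2 : ℂ)))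

/-- Order `m` sum rules with respect to `2` for a 1D filter. -/
def SumRules1D (a : ℤ → ℂ) (m : ℕ) : Prop :=
  fhat1 a 0 = 1 ∧ ∀ j : ℕ, j < m → ∑ᶠ k : ℤ, ((-1 : ℂ) ^ k * a k * (k : ℂ) ^ j) = 0

/-- A 2D filter has order `n` vanishing moments. -/
def VM2D (b : ℤ × ℤ → ℂ) (n : ℕ) : Prop :=
  ∀ μ : ℕ × ℕ, μ.1 + μ.2 < n →
    ∑ᶠ k : ℤ × ℤ, b k * (k.1 : ℂ) ^ μ.1 * (k.2 : ℂ) ^ μ.2 = 0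

/- ============ auxiliary lemmas ============ -/

section Aux

lemma neg_one_zpow_neg (k : ℤ) : (-1:ℂ)^(-k) = (-1:ℂ)^k := by
  rw [zpow_neg]
  rcases Int.even_or_odd k with h | h
  · rw [h.neg_one_zpow]; norm_num
  · rw [h.neg_one_zpow]; norm_num

lemma exp_neg_I_int_pi (k : ℤ) : Complex.exp (-(Complex.I) * (k:ℂ) * (π:ℂ)) = (-1:ℂ)^k := by
  have h : -(Complex.I) * (k:ℂ) * (π:ℂ) = ((-k : ℤ) : ℂ) * ((π:ℂ) * Complex.I) := by
    push_cast; ring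
  rw [h, Complex.exp_int_mul, Complex.exp_pi_mul_I, neg_one_zpow_neg]

lemma exp_I_int_pi (k : ℤ) : Complex.exp (Complex.I * (k:ℂ) * (π:ℂ)) = (-1:ℂ)^k := by
  have h : Complex.I * (k:ℂ) * (π:ℂ) = ((k : ℤ) : ℂ) * ((π:ℂ) * Complex.I) := by
    push_cast; ring
  rw [h, Complex.exp_int_mul, Complex.exp_pi_mul_I]

lemma exp_shift_pi (k : ℤ) (ω : ℝ) :
    Complex.exp (-(Complex.I) * (k:ℂ) * ((ω + π : ℝ):ℂ))
      = (-1:ℂ)^k * Complex.exp (-(Complex.I) * (k:ℂ) * (ω:ℂ)) := by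
  push_cast
  rw [show -(Complex.I) * (k:ℂ) * ((ω:ℂ) + (π:ℂ))
      = (-(Complex.I) * (k:ℂ) * (π:ℂ)) + (-(Complex.I) * (k:ℂ) * (ω:ℂ)) from by ring,
    Complex.exp_add, exp_neg_I_int_pi]

lemma exp_shift_pi_pos (k : ℤ) (ω : ℝ) :
    Complex.exp (Complex.I * (k:ℂ) * ((ω + π : ℝ):ℂ))
      = (-1:ℂ)^k * Complex.exp (Complex.I * (k:ℂ) * (ω:ℂ)) := by
  push_cast
  rw [show Complex.I * (k:ℂ) * ((ω:ℂ) + (π:ℂ))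
      = (Complex.I * (k:ℂ) * (π:ℂ)) + (Complex.I * (k:ℂ) * (ω:ℂ)) from by ring,
    Complex.exp_add, exp_I_int_pi]

lemma exp_shift_two_pi (k : ℤ) (ω : ℝ) :
    Complex.exp (-(Complex.I) * (k:ℂ) * ((ω + 2*π : ℝ):ℂ))
      = Complex.exp (-(Complex.I) * (k:ℂ) * (ω:ℂ)) := by
  push_cast
  rw [show -(Complex.I) * (k:ℂ) * ((ω:ℂ) + 2*(π:ℂ))
      = ((-k : ℤ):ℂ) * (2*(π:ℂ)*Complex.I) + (-(Complex.I) * (k:ℂ) * (ω:ℂ)) from by push_cast; ring,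
    Complex.exp_add, Complex.exp_int_mul_two_pi_mul_I, one_mul]

lemma exp_neg_I_add_pi (ω : ℝ) :
    Complex.exp (-(Complex.I) * ((ω + π : ℝ):ℂ)) = -Complex.exp (-(Complex.I) * (ω:ℂ)) := by
  have h1 : Complex.exp (-((π:ℂ) * Complex.I)) = -1 := by
    rw [Complex.exp_neg, Complex.exp_pi_mul_I]; norm_num
  push_cast
  rw [show -(Complex.I) * ((ω:ℂ) + (π:ℂ)) = -((π:ℂ)*Complex.I) + -(Complex.I) * (ω:ℂ) from by ring,
    Complex.exp_add, h1]
  ring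

lemma normSq_exp_real (ω : ℝ) : Complex.normSq (Complex.exp (-(Complex.I) * (ω:ℂ))) = 1 := by
  rw [Complex.normSq_eq_norm_sq, Complex.norm_exp]
  simp

lemma conj_mul_exp_real (ω : ℝ) :
    (starRingEnd ℂ) (Complex.exp (-(Complex.I) * (ω:ℂ))) * Complex.exp (-(Complex.I) * (ω:ℂ)) = 1 := by
  rw [← Complex.exp_conj, ← Complex.exp_add]
  simp

lemma support_fin_of_imp {α : Type*} {f g : α → ℂ} (hf : (Function.support f).Finite)
    (h : ∀ k, f k = 0 → g k = 0) : (Function.support g).Finite := by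
  apply hf.subset
  intro k hk
  rw [Function.mem_support] at hk ⊢
  exact fun h0 => hk (h k h0)

lemma support_mul_fin {α : Type*} {f : α → ℂ} (hf : (Function.support f).Finite) (g : α → ℂ) :
    (Function.support fun k => f k * g k).Finite :=
  support_fin_of_imp hf (fun k h0 => by rw [h0, zero_mul])

lemma support_tensor_fin {φ ψ : ℤ → ℂ} (hφ : (Function.support φ).Finite)
    (hψ : (Function.support ψ).Finite) :
    (Function.support fun k : ℤ × ℤ => φ k.1 * ψ k.2).Finite := by
  apply (hφ.prod hψ).subset
  intro k hk
  rw [Function.mem_support] at hk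
  exact ⟨left_ne_zero_of_mul hk, right_ne_zero_of_mul hk⟩

lemma finsum_tensor (φ ψ : ℤ → ℂ) (hφ : (Function.support φ).Finite)
    (hψ : (Function.support ψ).Finite) :
    ∑ᶠ k : ℤ × ℤ, φ k.1 * ψ k.2 = (∑ᶠ k, φ k) * (∑ᶠ k, ψ k) := by
  classical
  rw [finsum_eq_finset_sum_of_support_subset φ (s := hφ.toFinset) (by
      rw [Set.Finite.coe_toFinset]),
    finsum_eq_finset_sum_of_support_subset ψ (s := hψ.toFinset) (by
      rw [Set.Finite.coe_toFinset]),
    finsum_eq_finset_sum_of_support_subset _ (s := hφ.toFinset ×ˢ hψ.toFinset) (by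
      rw [Finset.coe_product, Set.Finite.coe_toFinset, Set.Finite.coe_toFinset]
      intro k hk
      rw [Function.mem_support] at hk
      exact ⟨left_ne_zero_of_mul hk, right_ne_zero_of_mul hk⟩),
    Finset.sum_product, Finset.sum_mul_sum]

lemma unique1 (c : ℤ → ℂ) (hc : (Function.support c).Finite)
    (h : ∀ ω : ℝ, ∑ᶠ k : ℤ, c k * Complex.exp (-(Complex.I) * (k : ℂ) * (ω : ℂ)) = 0) :
    ∀ k, c k = 0 := by
  classical
  set s := hc.toFinset with hs
  set N : ℕ := s.sup fun k => k.natAbs with hN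
  have hks : ∀ k ∈ s, 0 ≤ k + N := by
    intro k hk
    have h1 : k.natAbs ≤ N := Finset.le_sup (f := fun k => k.natAbs) hk
    omega
  set p : Polynomial ℂ := ∑ k ∈ s, Polynomial.C (c k) * Polynomial.X ^ (k + N).toNat with hp
  have hroot : ∀ ω : ℝ, p.IsRoot (Complex.exp (-(Complex.I) * (ω:ℂ))) := by
    intro ω
    have hz : Complex.exp (-(Complex.I) * (ω:ℂ)) ≠ 0 := Complex.exp_ne_zero _
    have heval : p.eval (Complex.exp (-(Complex.I) * (ω:ℂ)))
        = Complex.exp (-(Complex.I) * (ω:ℂ)) ^ (N:ℤ)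
          * ∑ k ∈ s, c k * Complex.exp (-(Complex.I) * (k:ℂ) * (ω:ℂ)) := by
      rw [hp, Polynomial.eval_finset_sum, Finset.mul_sum]
      refine Finset.sum_congr rfl fun k hk => ?_
      rw [Polynomial.eval_mul, Polynomial.eval_C, Polynomial.eval_pow, Polynomial.eval_X]
      have h1 : (Complex.exp (-(Complex.I)*(ω:ℂ))) ^ (k + N).toNat
          = Complex.exp (-(Complex.I)*(ω:ℂ)) ^ ((k:ℤ) + N) := by
        rw [← zpow_natCast, Int.toNat_of_nonneg (hks k hk)]
      have h2 : Complex.exp (-(Complex.I)*(ω:ℂ)) ^ (k:ℤ) = Complex.exp (-(Complex.I)*(k:ℂ)*(ω:ℂ)) := by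
        rw [show -(Complex.I)*(k:ℂ)*(ω:ℂ) = (k:ℂ) * (-(Complex.I)*(ω:ℂ)) from by ring,
          Complex.exp_int_mul]
      rw [h1, zpow_add₀ hz, h2]; ring
    have hsum : ∑ k ∈ s, c k * Complex.exp (-(Complex.I)*(k:ℂ)*(ω:ℂ)) = 0 := by
      rw [← finsum_eq_finset_sum_of_support_subset _ (s := s) ?_]
      · exact h ω
      · intro k hk
        have : c k ≠ 0 := fun h0 => hk (by simp [h0])
        simpa [hs, Set.Finite.mem_toFinset] using this
    simp only [Polynomial.IsRoot]
    rw [heval, hsum, mul_zero]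
  have hpz : p = 0 := by
    apply Polynomial.eq_zero_of_infinite_isRoot
    have hinj : Set.InjOn (fun ω : ℝ => Complex.exp (-(Complex.I)*(ω:ℂ))) (Set.Ioo 0 1) := by
      intro x hx y hy hxy
      simp only [Complex.exp_eq_exp_iff_exists_int] at hxy
      obtain ⟨n, hn⟩ := hxy
      have h2 : (x:ℂ) = (y:ℂ) - (n:ℂ)*(2*(π:ℂ)) := by
        linear_combination Complex.I * hn + ((x:ℂ) - (y:ℂ) + 2*(π:ℂ)*(n:ℂ)) * Complex.I_mul_I
      have h4 : x = y - (n:ℝ)*(2*π) := by exact_mod_cast h2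
      have hn0 : n = 0 := by
        by_contra hne
        have h5 : (1:ℝ) ≤ |(n:ℝ)| := by exact_mod_cast Int.one_le_abs (by omega)
        have hπ := Real.pi_gt_three
        obtain ⟨hx1, hx2⟩ := hx
        obtain ⟨hy1, hy2⟩ := hy
        rcases abs_cases (n:ℝ) with ⟨he, _⟩ | ⟨he, _⟩ <;> nlinarith
      rw [hn0] at h4
      push_cast at h4
      linarith
    have hIoo : (Set.Ioo (0:ℝ) 1).Infinite := Set.Ioo_infinite (by norm_num)
    refine (hIoo.image hinj).mono ?_
    rintro z ⟨ω, _, rfl⟩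
    exact hroot ω
  intro k
  by_cases hk : k ∈ s
  · have hcoeff : p.coeff ((k + N).toNat) = c k := by
      rw [hp, Polynomial.finset_sum_coeff, Finset.sum_eq_single k]
      · simp [Polynomial.coeff_C_mul, Polynomial.coeff_X_pow]
      · intro b hb hbk
        have hne : (b + N).toNat ≠ (k + N).toNat := by
          have hb' := hks b hb; have hk' := hks k hk; omega
        rw [Polynomial.coeff_C_mul, Polynomial.coeff_X_pow, if_neg (Ne.symm hne), mul_zero]
      · intro h'; exact absurd hk h'
    rw [← hcoeff, hpz, Polynomial.coeff_zero]
  · have : ¬ c k ≠ 0 := fun h0 => hk (by simp [hs, Set.Finite.mem_toFinset, Function.mem_support, h0])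
    simpa using this

lemma unique2 (c : ℤ × ℤ → ℂ) (hc : (Function.support c).Finite)
    (h : ∀ ω : ℝ × ℝ, ∑ᶠ k : ℤ × ℤ,
      c k * Complex.exp (-(Complex.I) * ((k.1:ℂ) * (ω.1:ℂ) + (k.2:ℂ) * (ω.2:ℂ))) = 0) :
    ∀ k, c k = 0 := by
  classical
  set s₁ := hc.toFinset.image Prod.fst with hs₁
  set s₂ := hc.toFinset.image Prod.snd with hs₂
  have hmem : ∀ k : ℤ × ℤ, c k ≠ 0 → k.1 ∈ s₁ ∧ k.2 ∈ s₂ := by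
    intro k hk
    have hks : k ∈ hc.toFinset := by
      rw [Set.Finite.mem_toFinset]; exact hk
    exact ⟨Finset.mem_image_of_mem _ hks, Finset.mem_image_of_mem _ hks⟩
  have hgsupp : ∀ ω₂ : ℝ, Function.support
      (fun k₁ => ∑ k₂ ∈ s₂, c (k₁, k₂) * Complex.exp (-(Complex.I) * (k₂:ℂ) * (ω₂:ℂ))) ⊆ ↑s₁ := by
    intro ω₂ k₁ hk₁
    rw [Function.mem_support] at hk₁
    by_contra hk
    apply hk₁
    apply Finset.sum_eq_zero
    intro k₂ _
    have hc0 : c (k₁, k₂) = 0 := by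
      by_contra hcc
      exact hk (hmem _ hcc).1
    rw [hc0, zero_mul]
  have key : ∀ (ω₂ : ℝ) (k₁ : ℤ),
      (∑ k₂ ∈ s₂, c (k₁, k₂) * Complex.exp (-(Complex.I) * (k₂:ℂ) * (ω₂:ℂ))) = 0 := by
    intro ω₂
    apply unique1 (fun k₁ => ∑ k₂ ∈ s₂, c (k₁, k₂) * Complex.exp (-(Complex.I) * (k₂:ℂ) * (ω₂:ℂ)))
    · exact s₁.finite_toSet.subset (hgsupp ω₂)
    · intro ω₁
      have h0 := h (ω₁, ω₂)
      rw [finsum_eq_finset_sum_of_support_subset _ (s := s₁ ×ˢ s₂) (by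
          intro k hk
          rw [Function.mem_support] at hk
          have := hmem k (left_ne_zero_of_mul hk)
          rw [Finset.coe_product]
          exact this), Finset.sum_product] at h0
      rw [finsum_eq_finset_sum_of_support_subset _ (s := s₁) (by
          intro k₁ hk₁
          rw [Function.mem_support] at hk₁
          exact hgsupp ω₂ (Function.mem_support.mpr (left_ne_zero_of_mul hk₁))), ← h0]
      refine Finset.sum_congr rfl fun k₁ _ => ?_
      rw [Finset.sum_mul]
      refine Finset.sum_congr rfl fun k₂ _ => ?_
      rw [mul_assoc, ← Complex.exp_add]
      congr 2
      ring
  intro k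
  obtain ⟨k₁, k₂⟩ := k
  refine unique1 (fun k₂ => c (k₁, k₂)) ?_ ?_ k₂
  · apply s₂.finite_toSet.subset
    intro j hj
    rw [Function.mem_support] at hj
    exact (hmem _ hj).2
  · intro ω₂
    rw [finsum_eq_finset_sum_of_support_subset _ (s := s₂) (by
        intro j hj
        rw [Function.mem_support] at hj
        exact (hmem _ (left_ne_zero_of_mul hj)).2)]
    exact key ω₂ k₁

lemma fhat1_periodic (u : ℤ → ℂ) (ω : ℝ) : fhat1 u (ω + 2*π) = fhat1 u ω := by
  simp only [fhat1]
  exact finsum_congr fun k => by rw [exp_shift_two_pi]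

lemma fhat2_tensor (φ ψ : ℤ → ℂ) (hφ : (Function.support φ).Finite)
    (hψ : (Function.support ψ).Finite) (ω : ℝ × ℝ) :
    fhat2 (fun k => φ k.1 * ψ k.2) ω = fhat1 φ ω.1 * fhat1 ψ ω.2 := by
  simp only [fhat2, fhat1]
  rw [← finsum_tensor (fun j => φ j * Complex.exp (-(Complex.I) * (j:ℂ) * (ω.1:ℂ)))
      (fun j => ψ j * Complex.exp (-(Complex.I) * (j:ℂ) * (ω.2:ℂ)))
      (support_mul_fin hφ _) (support_mul_fin hψ _)]
  refine finsum_congr fun k => ?_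
  rw [show -(Complex.I) * ((k.1:ℂ) * (ω.1:ℂ) + (k.2:ℂ) * (ω.2:ℂ))
      = (-(Complex.I) * (k.1:ℂ) * (ω.1:ℂ)) + (-(Complex.I) * (k.2:ℂ) * (ω.2:ℂ)) from by ring,
    Complex.exp_add]
  ring

lemma conj_fhat1 (d : ℤ → ℝ) (hd : (Function.support fun k => (d k : ℂ)).Finite) (x : ℝ) :
    (starRingEnd ℂ) (fhat1 (fun k => (d k : ℂ)) x)
      = ∑ᶠ k : ℤ, (d k : ℂ) * Complex.exp (Complex.I * (k:ℂ) * (x:ℂ)) := by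
  simp only [fhat1]
  calc (starRingEnd ℂ) (∑ᶠ k : ℤ, (d k : ℂ) * Complex.exp (-(Complex.I) * (k:ℂ) * (x:ℂ)))
      = ∑ᶠ k : ℤ, (starRingEnd ℂ) ((d k : ℂ) * Complex.exp (-(Complex.I) * (k:ℂ) * (x:ℂ))) :=
        (starRingEnd ℂ).toAddMonoidHom.map_finsum (support_mul_fin hd _)
    _ = ∑ᶠ k : ℤ, (d k : ℂ) * Complex.exp (Complex.I * (k:ℂ) * (x:ℂ)) := by
        refine finsum_congr fun k => ?_
        rw [map_mul, ← Complex.exp_conj]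
        congr 1
        · exact Complex.conj_ofReal _
        · congr 1
          simp

lemma fhatA (d : ℤ → ℝ) (hd : (Function.support fun k => (d k : ℂ)).Finite) (ω : ℝ) :
    fhat1 (fun j => (-1:ℂ)^(1-j) * (d (1-j) : ℂ)) ω
      = Complex.exp (-(Complex.I) * (ω:ℂ)) * (starRingEnd ℂ) (fhat1 (fun k => (d k : ℂ)) (ω+π)) := by
  rw [conj_fhat1 d hd]
  simp only [fhat1]
  calc ∑ᶠ j : ℤ, (-1:ℂ)^(1-j) * (d (1-j) : ℂ) * Complex.exp (-(Complex.I) * (j:ℂ) * (ω:ℂ))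
      = ∑ᶠ j : ℤ, (fun k : ℤ => Complex.exp (-(Complex.I) * (ω:ℂ))
          * ((d k : ℂ) * Complex.exp (Complex.I * (k:ℂ) * ((ω+π : ℝ):ℂ)))) ((Equiv.subLeft (1:ℤ)) j) := by
        refine finsum_congr fun j => ?_
        simp only [Equiv.subLeft_apply]
        rw [exp_shift_pi_pos]
        rw [show Complex.I * ((1-j : ℤ):ℂ) * (ω:ℂ)
            = (Complex.I * (ω:ℂ)) + -(Complex.I) * (j:ℂ) * (ω:ℂ) from by push_cast; ring,
          Complex.exp_add,
          show Complex.exp (-(Complex.I) * (ω:ℂ)) * ((d (1-j) : ℂ) * ((-1:ℂ)^(1-j) *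
            (Complex.exp (Complex.I * (ω:ℂ)) * Complex.exp (-(Complex.I) * (j:ℂ) * (ω:ℂ)))))
            = (-1:ℂ)^(1-j) * (d (1-j) : ℂ) * Complex.exp (-(Complex.I) * (j:ℂ) * (ω:ℂ))
              * (Complex.exp (-(Complex.I) * (ω:ℂ)) * Complex.exp (Complex.I * (ω:ℂ))) from by ring,
          ← Complex.exp_add]
        norm_num
    _ = ∑ᶠ k : ℤ, Complex.exp (-(Complex.I) * (ω:ℂ))
          * ((d k : ℂ) * Complex.exp (Complex.I * (k:ℂ) * ((ω+π : ℝ):ℂ))) :=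
        finsum_comp_equiv (Equiv.subLeft (1:ℤ))
          (f := fun k : ℤ => Complex.exp (-(Complex.I) * (ω:ℂ))
            * ((d k : ℂ) * Complex.exp (Complex.I * (k:ℂ) * ((ω+π : ℝ):ℂ))))
    _ = Complex.exp (-(Complex.I) * (ω:ℂ))
          * ∑ᶠ k : ℤ, (d k : ℂ) * Complex.exp (Complex.I * (k:ℂ) * ((ω+π : ℝ):ℂ)) :=
        (mul_finsum _ _).symm

lemma fhatB (d : ℤ → ℝ) (hd : (Function.support fun k => (d k : ℂ)).Finite) (ω : ℝ) :
    fhat1 (fun j => (-1:ℂ)^j * (d (-j) : ℂ)) ω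
      = (starRingEnd ℂ) (fhat1 (fun k => (d k : ℂ)) (ω+π)) := by
  rw [conj_fhat1 d hd]
  simp only [fhat1]
  calc ∑ᶠ j : ℤ, (-1:ℂ)^j * (d (-j) : ℂ) * Complex.exp (-(Complex.I) * (j:ℂ) * (ω:ℂ))
      = ∑ᶠ j : ℤ, (fun k : ℤ => (d k : ℂ)
          * Complex.exp (Complex.I * (k:ℂ) * ((ω+π : ℝ):ℂ))) ((Equiv.neg ℤ) j) := by
        refine finsum_congr fun j => ?_
        simp only [Equiv.neg_apply]
        rw [exp_shift_pi_pos]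
        rw [show Complex.I * ((-j : ℤ):ℂ) * (ω:ℂ) = -(Complex.I) * (j:ℂ) * (ω:ℂ) from by
            push_cast; ring]
        rw [show ((-1:ℂ)^(-j) : ℂ) = (-1:ℂ)^j from neg_one_zpow_neg j]
        ring
    _ = ∑ᶠ k : ℤ, (d k : ℂ) * Complex.exp (Complex.I * (k:ℂ) * ((ω+π : ℝ):ℂ)) :=
        finsum_comp_equiv (Equiv.neg ℤ)
          (f := fun k : ℤ => (d k : ℂ) * Complex.exp (Complex.I * (k:ℂ) * ((ω+π : ℝ):ℂ)))

lemma fhatC (d : ℤ → ℝ) (hd : (Function.support fun k => (d k : ℂ)).Finite) (ω : ℝ) :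
    fhat1 (fun j => (d (-j) : ℂ)) ω = (starRingEnd ℂ) (fhat1 (fun k => (d k : ℂ)) ω) := by
  rw [conj_fhat1 d hd]
  simp only [fhat1]
  calc ∑ᶠ j : ℤ, (d (-j) : ℂ) * Complex.exp (-(Complex.I) * (j:ℂ) * (ω:ℂ))
      = ∑ᶠ j : ℤ, (fun k : ℤ => (d k : ℂ)
          * Complex.exp (Complex.I * (k:ℂ) * (ω:ℂ))) ((Equiv.neg ℤ) j) := by
        refine finsum_congr fun j => ?_
        simp only [Equiv.neg_apply]
        rw [show Complex.I * ((-j : ℤ):ℂ) * (ω:ℂ) = -(Complex.I) * (j:ℂ) * (ω:ℂ) from by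
            push_cast; ring]
    _ = ∑ᶠ k : ℤ, (d k : ℂ) * Complex.exp (Complex.I * (k:ℂ) * (ω:ℂ)) :=
        finsum_comp_equiv (Equiv.neg ℤ)
          (f := fun k : ℤ => (d k : ℂ) * Complex.exp (Complex.I * (k:ℂ) * (ω:ℂ)))

lemma fhatD (d : ℤ → ℝ) (ω : ℝ) :
    fhat1 (fun j => (-1:ℂ)^j * (d j : ℂ)) ω = fhat1 (fun k => (d k : ℂ)) (ω+π) := by
  simp only [fhat1]
  refine finsum_congr fun k => ?_
  rw [exp_shift_pi]
  ring

end Aux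

/-- double canonical quincunx tight framelet filter banks from a tensor product
of two orthonormal 2-wavelet filters, and the vanishing moments of the high-pass filters. -/
theorem stmt_18 (d₁ d₂ : ℤ → ℝ)
    (hd₁fin : (Function.support d₁).Finite) (hd₂fin : (Function.support d₂).Finite)
    (hd₁ : ∀ ω : ℝ, Complex.normSq (fhat1 (fun k => (d₁ k : ℂ)) ω)
      + Complex.normSq (fhat1 (fun k => (d₁ k : ℂ)) (ω + π)) = 1)
    (hd₂ : ∀ ω : ℝ, Complex.normSq (fhat1 (fun k => (d₂ k : ℂ)) ω)
      + Complex.normSq (fhat1 (fun k => (d₂ k : ℂ)) (ω + π)) = 1)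
    (b₀ b₁ b₂ b₃ : ℤ × ℤ → ℂ)
    (hb₀fin : (Function.support b₀).Finite) (hb₁fin : (Function.support b₁).Finite)
    (hb₂fin : (Function.support b₂).Finite) (hb₃fin : (Function.support b₃).Finite)
    (hb₀ : ∀ ω : ℝ × ℝ, fhat2 b₀ ω
      = fhat1 (fun k => (d₁ k : ℂ)) ω.1 * fhat1 (fun k => (d₂ k : ℂ)) ω.2)
    (hb₂ : ∀ ω : ℝ × ℝ, fhat2 b₂ ω
      = fhat1 (fun k => (d₁ k : ℂ)) ω.1 * fhat1 (fun k => (d₂ k : ℂ)) (ω.2 + π))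
    (hb₁ : ∀ ω : ℝ × ℝ, fhat2 b₁ ω
      = Complex.exp (-(Complex.I) * (ω.1 : ℂ)) * (starRingEnd ℂ) (fhat2 b₀ (ω.1 + π, ω.2 + π)))
    (hb₃ : ∀ ω : ℝ × ℝ, fhat2 b₃ ω
      = Complex.exp (-(Complex.I) * (ω.1 : ℂ)) * (starRingEnd ℂ) (fhat2 b₂ (ω.1 + π, ω.2 + π))) :
    -- {b₀; b₁, b₂, b₃} is a quincunx tight framelet filter bank
    ((∀ ω : ℝ × ℝ, Complex.normSq (fhat2 b₀ ω) + Complex.normSq (fhat2 b₁ ω)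
        + Complex.normSq (fhat2 b₂ ω) + Complex.normSq (fhat2 b₃ ω) = 1) ∧
      (∀ ω : ℝ × ℝ, (starRingEnd ℂ) (fhat2 b₀ ω) * fhat2 b₀ (ω.1 + π, ω.2 + π)
        + (starRingEnd ℂ) (fhat2 b₁ ω) * fhat2 b₁ (ω.1 + π, ω.2 + π)
        + (starRingEnd ℂ) (fhat2 b₂ ω) * fhat2 b₂ (ω.1 + π, ω.2 + π)
        + (starRingEnd ℂ) (fhat2 b₃ ω) * fhat2 b₃ (ω.1 + π, ω.2 + π) = 0)) ∧
    -- vanishing moments of the high-pass filters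
    (∀ n m : ℕ, SumRules1D (fun k => (d₁ k : ℂ)) n → SumRules1D (fun k => (d₂ k : ℂ)) m →
      VM2D b₁ (min m n) ∧ VM2D b₂ (min m n) ∧ VM2D b₃ (min m n)) := by
  have hcd₁ : (Function.support fun k => (d₁ k : ℂ)).Finite := by
    have hs : (Function.support fun k => (d₁ k : ℂ)) = Function.support d₁ := by
      ext k; simp [Function.mem_support]
    rw [hs]; exact hd₁fin
  have hcd₂ : (Function.support fun k => (d₂ k : ℂ)).Finite := by
    have hs : (Function.support fun k => (d₂ k : ℂ)) = Function.support d₂ := by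
      ext k; simp [Function.mem_support]
    rw [hs]; exact hd₂fin
  have hper₁ : ∀ x : ℝ, fhat1 (fun k => (d₁ k : ℂ)) (x + π + π) = fhat1 (fun k => (d₁ k : ℂ)) x := by
    intro x
    rw [show x + π + π = x + 2*π from by ring, fhat1_periodic]
  have hper₂ : ∀ x : ℝ, fhat1 (fun k => (d₂ k : ℂ)) (x + π + π) = fhat1 (fun k => (d₂ k : ℂ)) x := by
    intro x
    rw [show x + π + π = x + 2*π from by ring, fhat1_periodic]
  -- support finiteness of transformed filters
  have hφA : (Function.support fun j : ℤ => (-1:ℂ)^(1-j) * (d₁ (1-j) : ℂ)).Finite := by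
    apply (hcd₁.image (fun k => 1 - k)).subset
    intro j hj
    rw [Function.mem_support] at hj
    exact ⟨1 - j, Function.mem_support.mpr (right_ne_zero_of_mul hj), by show 1 - (1 - j) = j; omega⟩
  have hψB : (Function.support fun j : ℤ => (-1:ℂ)^j * (d₂ (-j) : ℂ)).Finite := by
    apply (hcd₂.image (fun k => -k)).subset
    intro j hj
    rw [Function.mem_support] at hj
    exact ⟨-j, Function.mem_support.mpr (right_ne_zero_of_mul hj), by show -(-j) = j; omega⟩
  have hψC : (Function.support fun j : ℤ => ((d₂ (-j) : ℂ))).Finite := by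
    apply (hcd₂.image (fun k => -k)).subset
    intro j hj
    rw [Function.mem_support] at hj
    exact ⟨-j, Function.mem_support.mpr hj, by show -(-j) = j; omega⟩
  have hψD : (Function.support fun j : ℤ => (-1:ℂ)^j * (d₂ j : ℂ)).Finite :=
    support_fin_of_imp hcd₂ (fun k h0 => by
      rw [show ((d₂ k : ℂ)) = 0 from h0, mul_zero])
  -- pointwise identities
  have hkey₁ : ∀ ω : ℝ × ℝ, fhat2 b₁ ω
      = fhat2 (fun k : ℤ × ℤ => ((-1:ℂ)^(1-k.1) * (d₁ (1-k.1) : ℂ)) * ((-1:ℂ)^(k.2) * (d₂ (-k.2) : ℂ))) ω := by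
    intro ω
    rw [hb₁ ω, fhat2_tensor _ _ hφA hψB, fhatA d₁ hcd₁, fhatB d₂ hcd₂, hb₀ (ω.1 + π, ω.2 + π),
      map_mul]
    ring
  have hkey₃ : ∀ ω : ℝ × ℝ, fhat2 b₃ ω
      = fhat2 (fun k : ℤ × ℤ => ((-1:ℂ)^(1-k.1) * (d₁ (1-k.1) : ℂ)) * ((d₂ (-k.2) : ℂ))) ω := by
    intro ω
    rw [hb₃ ω, fhat2_tensor _ _ hφA hψC, fhatA d₁ hcd₁, fhatC d₂ hcd₂, hb₂ (ω.1 + π, ω.2 + π)]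
    rw [show (ω.1 + π, ω.2 + π).2 + π = ω.2 + π + π from rfl, hper₂ ω.2, map_mul]
    ring
  have hkey₂ : ∀ ω : ℝ × ℝ, fhat2 b₂ ω
      = fhat2 (fun k : ℤ × ℤ => ((d₁ k.1 : ℂ)) * ((-1:ℂ)^(k.2) * (d₂ k.2 : ℂ))) ω := by
    intro ω
    rw [hb₂ ω, fhat2_tensor _ _ hcd₁ hψD, fhatD d₂]
  -- identification of filters
  have ident : ∀ (b : ℤ × ℤ → ℂ) (hb : (Function.support b).Finite) (t : ℤ × ℤ → ℂ)
      (ht : (Function.support t).Finite) (hft : ∀ ω : ℝ × ℝ, fhat2 b ω = fhat2 t ω),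
      ∀ k, b k = t k := by
    intro b hb t ht hft
    have h0 : ∀ k, b k - t k = 0 := by
      apply unique2 (fun k => b k - t k)
      · exact (hb.union ht).subset (Function.support_sub b t)
      · intro ω
        have hsub : ∑ᶠ k : ℤ × ℤ, (b k - t k)
              * Complex.exp (-(Complex.I) * ((k.1:ℂ) * (ω.1:ℂ) + (k.2:ℂ) * (ω.2:ℂ)))
            = fhat2 b ω - fhat2 t ω := by
          simp only [fhat2]
          rw [← finsum_sub_distrib (support_mul_fin hb _) (support_mul_fin ht _)]
          exact finsum_congr fun k => by ring
        rw [hsub, hft ω, sub_self]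
    intro k
    have := h0 k
    linear_combination this
  have hb₁eq := ident b₁ hb₁fin _ (support_tensor_fin hφA hψB) hkey₁
  have hb₂eq := ident b₂ hb₂fin _ (support_tensor_fin hcd₁ hψD) hkey₂
  have hb₃eq := ident b₃ hb₃fin _ (support_tensor_fin hφA hψC) hkey₃
  constructor
  · constructor
    · -- tight frame identity
      intro ω
      have e₀ := hb₀ ω
      have e₂ := hb₂ ω
      have e₁ := hb₁ ω
      have e₃ := hb₃ ω
      rw [hb₀ (ω.1 + π, ω.2 + π)] at e₁
      rw [hb₂ (ω.1 + π, ω.2 + π)] at e₃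
      simp only at e₁ e₃
      rw [hper₂ ω.2] at e₃
      rw [e₀, e₁, e₂, e₃]
      simp only [map_mul, Complex.normSq_mul, Complex.normSq_conj, normSq_exp_real, one_mul]
      linear_combination (Complex.normSq (fhat1 (fun k => (d₂ k : ℂ)) ω.2)
        + Complex.normSq (fhat1 (fun k => (d₂ k : ℂ)) (ω.2 + π))) * hd₁ ω.1 + hd₂ ω.2
    · -- quincunx condition
      intro ω
      have e₀ := hb₀ ω
      have e₀' := hb₀ (ω.1 + π, ω.2 + π)
      have e₂ := hb₂ ω
      have e₂' := hb₂ (ω.1 + π, ω.2 + π)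
      simp only at e₂'
      rw [hper₂ ω.2] at e₂'
      have e₁ := hb₁ ω
      rw [hb₀ (ω.1 + π, ω.2 + π)] at e₁
      have e₁' := hb₁ (ω.1 + π, ω.2 + π)
      simp only at e₁'
      rw [hb₀ (ω.1 + π + π, ω.2 + π + π)] at e₁'
      simp only at e₁'
      rw [hper₁ ω.1, hper₂ ω.2, exp_neg_I_add_pi ω.1] at e₁'
      have e₃ := hb₃ ω
      rw [hb₂ (ω.1 + π, ω.2 + π)] at e₃
      simp only at e₃
      rw [hper₂ ω.2] at e₃
      have e₃' := hb₃ (ω.1 + π, ω.2 + π)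
      simp only at e₃'
      rw [hb₂ (ω.1 + π + π, ω.2 + π + π)] at e₃'
      simp only at e₃'
      rw [hper₁ ω.1, hper₂ (ω.2 + π), exp_neg_I_add_pi ω.1] at e₃'
      rw [e₀, e₀', e₁, e₁', e₂, e₂', e₃, e₃']
      simp only [map_mul, Complex.conj_conj, map_neg]
      have hz := conj_mul_exp_real ω.1
      linear_combination (-(((starRingEnd ℂ) (fhat1 (fun k => (d₁ k : ℂ)) ω.1))
          * ((starRingEnd ℂ) (fhat1 (fun k => (d₂ k : ℂ)) ω.2))
          * (fhat1 (fun k => (d₁ k : ℂ)) (ω.1 + π)) * (fhat1 (fun k => (d₂ k : ℂ)) (ω.2 + π))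
        + ((starRingEnd ℂ) (fhat1 (fun k => (d₁ k : ℂ)) ω.1))
          * ((starRingEnd ℂ) (fhat1 (fun k => (d₂ k : ℂ)) (ω.2 + π)))
          * (fhat1 (fun k => (d₁ k : ℂ)) (ω.1 + π)) * (fhat1 (fun k => (d₂ k : ℂ)) ω.2))) * hz
  · -- vanishing moments
    intro n m SR₁ SR₂
    have hSRfin₁ : ∀ j : ℕ, (Function.support fun k : ℤ => (-1:ℂ)^k * (d₁ k : ℂ) * (k:ℂ)^j).Finite :=
      fun j => support_fin_of_imp hcd₁ (fun k h0 => by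
        rw [show ((d₁ k : ℂ)) = 0 from h0, mul_zero, zero_mul])
    have hSRfin₂ : ∀ j : ℕ, (Function.support fun k : ℤ => (-1:ℂ)^k * (d₂ k : ℂ) * (k:ℂ)^j).Finite :=
      fun j => support_fin_of_imp hcd₂ (fun k h0 => by
        rw [show ((d₂ k : ℂ)) = 0 from h0, mul_zero, zero_mul])
    -- second-factor vanishing (from sum rules of d₂), used for b₁
    have hfB : ∀ j : ℕ, j < m → ∑ᶠ k : ℤ, ((-1:ℂ)^k * (d₂ (-k) : ℂ)) * (k:ℂ)^j = 0 := by
      intro j hj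
      calc ∑ᶠ k : ℤ, ((-1:ℂ)^k * (d₂ (-k) : ℂ)) * (k:ℂ)^j
          = ∑ᶠ k : ℤ, (fun i : ℤ => ((-1:ℂ)^j) * ((-1:ℂ)^i * (d₂ i : ℂ) * (i:ℂ)^j)) ((Equiv.neg ℤ) k) := by
            refine finsum_congr fun k => ?_
            simp only [Equiv.neg_apply, neg_one_zpow_neg]
            push_cast
            rw [neg_pow]
            have h2 : (-1:ℂ)^j * (-1:ℂ)^j = 1 := by
              rw [← pow_add]; exact Even.neg_one_pow ⟨j, rfl⟩
            linear_combination (-((-1:ℂ)^k * (d₂ (-k) : ℂ) * (k:ℂ)^j)) * h2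
        _ = ∑ᶠ i : ℤ, ((-1:ℂ)^j) * ((-1:ℂ)^i * (d₂ i : ℂ) * (i:ℂ)^j) :=
            finsum_comp_equiv (Equiv.neg ℤ)
              (f := fun i : ℤ => ((-1:ℂ)^j) * ((-1:ℂ)^i * (d₂ i : ℂ) * (i:ℂ)^j))
        _ = ((-1:ℂ)^j) * ∑ᶠ i : ℤ, ((-1:ℂ)^i * (d₂ i : ℂ) * (i:ℂ)^j) :=
            (mul_finsum _ _).symm
        _ = 0 := by rw [SR₂.2 j hj, mul_zero]
    -- second-factor for b₂
    have hfD : ∀ j : ℕ, j < m → ∑ᶠ k : ℤ, ((-1:ℂ)^k * (d₂ k : ℂ)) * (k:ℂ)^j = 0 := by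
      intro j hj
      rw [← SR₂.2 j hj]
    -- first-factor vanishing (from sum rules of d₁), used for b₃
    have hfA : ∀ j : ℕ, j < n → ∑ᶠ k : ℤ, ((-1:ℂ)^(1-k) * (d₁ (1-k) : ℂ)) * (k:ℂ)^j = 0 := by
      intro j hj
      have hSR : ∀ i : ℕ, i < n → ∑ k ∈ hcd₁.toFinset, (-1:ℂ)^k * (d₁ k : ℂ) * (k:ℂ)^i = 0 := by
        intro i hi
        rw [← finsum_eq_finset_sum_of_support_subset _ (s := hcd₁.toFinset) (by
            rw [Set.Finite.coe_toFinset]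
            intro k hk
            rw [Function.mem_support] at hk ⊢
            intro h0
            exact hk (by rw [show ((d₁ k : ℂ)) = 0 from h0, mul_zero, zero_mul]))]
        exact SR₁.2 i hi
      calc ∑ᶠ k : ℤ, ((-1:ℂ)^(1-k) * (d₁ (1-k) : ℂ)) * (k:ℂ)^j
          = ∑ᶠ k : ℤ, (fun i : ℤ => ((-1:ℂ)^i * (d₁ i : ℂ)) * ((1:ℂ)-(i:ℂ))^j)
              ((Equiv.subLeft (1:ℤ)) k) := by
            refine finsum_congr fun k => ?_
            simp only [Equiv.subLeft_apply, sub_sub_cancel]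
            push_cast
            ring
        _ = ∑ᶠ i : ℤ, ((-1:ℂ)^i * (d₁ i : ℂ)) * ((1:ℂ)-(i:ℂ))^j :=
            finsum_comp_equiv (Equiv.subLeft (1:ℤ))
              (f := fun i : ℤ => ((-1:ℂ)^i * (d₁ i : ℂ)) * ((1:ℂ)-(i:ℂ))^j)
        _ = ∑ k ∈ hcd₁.toFinset, ((-1:ℂ)^k * (d₁ k : ℂ)) * ((1:ℂ)-(k:ℂ))^j :=
            finsum_eq_finset_sum_of_support_subset _ (by
              rw [Set.Finite.coe_toFinset]
              intro k hk
              rw [Function.mem_support] at hk ⊢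
              intro h0
              exact hk (by rw [show ((d₁ k : ℂ)) = 0 from h0, mul_zero, zero_mul]))
        _ = ∑ k ∈ hcd₁.toFinset, ∑ i ∈ Finset.range (j+1),
              ((j.choose i : ℂ) * (-1:ℂ)^i) * ((-1:ℂ)^k * (d₁ k : ℂ) * (k:ℂ)^i) := by
            refine Finset.sum_congr rfl fun k _ => ?_
            rw [show ((1:ℂ)-(k:ℂ)) = (-(k:ℂ)) + 1 from by ring, add_pow, Finset.mul_sum]
            refine Finset.sum_congr rfl fun i _ => ?_
            rw [neg_pow]
            ring
        _ = ∑ i ∈ Finset.range (j+1), ∑ k ∈ hcd₁.toFinset,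
              ((j.choose i : ℂ) * (-1:ℂ)^i) * ((-1:ℂ)^k * (d₁ k : ℂ) * (k:ℂ)^i) := Finset.sum_comm
        _ = 0 := by
            refine Finset.sum_eq_zero fun i hi => ?_
            rw [← Finset.mul_sum,
              hSR i (lt_of_le_of_lt (Nat.lt_succ_iff.mp (Finset.mem_range.mp hi)) hj), mul_zero]
    refine ⟨?_, ?_, ?_⟩
    · -- VM2D b₁
      intro μ hμ
      have hμ₂ : μ.2 < m := by omega
      calc ∑ᶠ k : ℤ × ℤ, b₁ k * (k.1:ℂ)^μ.1 * (k.2:ℂ)^μ.2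
          = ∑ᶠ k : ℤ × ℤ, (fun i : ℤ => ((-1:ℂ)^(1-i) * (d₁ (1-i) : ℂ)) * (i:ℂ)^μ.1) k.1
              * (fun i : ℤ => ((-1:ℂ)^i * (d₂ (-i) : ℂ)) * (i:ℂ)^μ.2) k.2 := by
            refine finsum_congr fun k => ?_
            rw [hb₁eq k]
            ring
        _ = (∑ᶠ i : ℤ, ((-1:ℂ)^(1-i) * (d₁ (1-i) : ℂ)) * (i:ℂ)^μ.1)
            * (∑ᶠ i : ℤ, ((-1:ℂ)^i * (d₂ (-i) : ℂ)) * (i:ℂ)^μ.2) :=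
            finsum_tensor (fun i : ℤ => ((-1:ℂ)^(1-i) * (d₁ (1-i) : ℂ)) * (i:ℂ)^μ.1)
              (fun i : ℤ => ((-1:ℂ)^i * (d₂ (-i) : ℂ)) * (i:ℂ)^μ.2)
              (support_mul_fin hφA _) (support_mul_fin hψB _)
        _ = 0 := by rw [hfB μ.2 hμ₂, mul_zero]
    · -- VM2D b₂
      intro μ hμ
      have hμ₂ : μ.2 < m := by omega
      calc ∑ᶠ k : ℤ × ℤ, b₂ k * (k.1:ℂ)^μ.1 * (k.2:ℂ)^μ.2
          = ∑ᶠ k : ℤ × ℤ, (fun i : ℤ => (d₁ i : ℂ) * (i:ℂ)^μ.1) k.1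
              * (fun i : ℤ => ((-1:ℂ)^i * (d₂ i : ℂ)) * (i:ℂ)^μ.2) k.2 := by
            refine finsum_congr fun k => ?_
            rw [hb₂eq k]
            ring
        _ = (∑ᶠ i : ℤ, (d₁ i : ℂ) * (i:ℂ)^μ.1)
            * (∑ᶠ i : ℤ, ((-1:ℂ)^i * (d₂ i : ℂ)) * (i:ℂ)^μ.2) :=
            finsum_tensor (fun i : ℤ => (d₁ i : ℂ) * (i:ℂ)^μ.1)
              (fun i : ℤ => ((-1:ℂ)^i * (d₂ i : ℂ)) * (i:ℂ)^μ.2)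
              (support_mul_fin hcd₁ _) (support_mul_fin hψD _)
        _ = 0 := by rw [hfD μ.2 hμ₂, mul_zero]
    · -- VM2D b₃
      intro μ hμ
      have hμ₁ : μ.1 < n := by omega
      calc ∑ᶠ k : ℤ × ℤ, b₃ k * (k.1:ℂ)^μ.1 * (k.2:ℂ)^μ.2
          = ∑ᶠ k : ℤ × ℤ, (fun i : ℤ => ((-1:ℂ)^(1-i) * (d₁ (1-i) : ℂ)) * (i:ℂ)^μ.1) k.1
              * (fun i : ℤ => (d₂ (-i) : ℂ) * (i:ℂ)^μ.2) k.2 := by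
            refine finsum_congr fun k => ?_
            rw [hb₃eq k]
            ring
        _ = (∑ᶠ i : ℤ, ((-1:ℂ)^(1-i) * (d₁ (1-i) : ℂ)) * (i:ℂ)^μ.1)
            * (∑ᶠ i : ℤ, (d₂ (-i) : ℂ) * (i:ℂ)^μ.2) :=
            finsum_tensor (fun i : ℤ => ((-1:ℂ)^(1-i) * (d₁ (1-i) : ℂ)) * (i:ℂ)^μ.1)
              (fun i : ℤ => (d₂ (-i) : ℂ) * (i:ℂ)^μ.2)
              (support_mul_fin hφA _) (support_mul_fin hψC _)
        _ = 0 := by rw [hfA μ.1 hμ₁, zero_mul]
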